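/- arXiv:1508.00204 — 2 statements merged into one kernel-verified Lean document; each statement's English description precedes it below -/
import Mathlib

section
/- For real parameters λ₁, λ₂ > 0, exponents α₁, α₂ ≥ 0, γ > -1 with α₁ + α₂ - γ < 1, and ε > 0, the integral ∫_{|x|≤ε} |x|^γ ⟨x/λ₁⟩^{-α₁} ⟨x/λ₂⟩^{-α₂} dx over the real line is comparable (up to constants depending only on α₁, α₂, γ) to ε^{γ+1} ⟨ε/λ₁⟩^{-α₁} ⟨ε/λ₂⟩^{-α₂}. -/
open MeasureTheory intervalIntegral

/-- Japanese bracket `⟨y⟩ = (1+y²)^{1/2}`. -/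
noncomputable def jb (y : ℝ) : ℝ := Real.sqrt (1 + y ^ 2)

lemma jb_pos (y : ℝ) : 0 < jb y := Real.sqrt_pos.2 (by positivity)

lemma one_le_jb (y : ℝ) : 1 ≤ jb y := by
  have := Real.sqrt_le_sqrt (show (1:ℝ) ≤ 1 + y ^ 2 by nlinarith)
  simpa [Real.sqrt_one, jb] using this

lemma jb_abs (y : ℝ) : jb |y| = jb y := by simp [jb, sq_abs]

lemma continuous_jb : Continuous jb :=
  Real.continuous_sqrt.comp (continuous_const.add (continuous_id.pow 2))

lemma jb_mono {a b : ℝ} (ha : 0 ≤ a) (hab : a ≤ b) : jb a ≤ jb b :=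
  Real.sqrt_le_sqrt (by nlinarith)

lemma jb_scale {a b : ℝ} (ha : 0 < a) (hab : a ≤ b) : jb b ≤ b / a * jb a := by
  have h1 : 1 ≤ b / a := (one_le_div ha).2 hab
  have h2 : (b / a) ^ 2 * a ^ 2 = b ^ 2 := by field_simp
  have h3 : Real.sqrt (1 + b ^ 2) ≤ Real.sqrt ((b / a) ^ 2 * (1 + a ^ 2)) :=
    Real.sqrt_le_sqrt (by nlinarith)
  rw [Real.sqrt_mul (sq_nonneg _), Real.sqrt_sq (by positivity : (0:ℝ) ≤ b / a)] at h3
  simpa [jb] using h3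

lemma key_upper {l α ε t : ℝ} (hl : 0 < l) (hα : 0 ≤ α) (ht : 0 < t) (htε : t ≤ ε) :
    jb (t / l) ^ (-α) ≤ ε ^ α * t ^ (-α) * jb (ε / l) ^ (-α) := by
  have hε : 0 < ε := ht.trans_le htε
  have h0 : (ε / l) / (t / l) = ε / t := by field_simp
  have h1 : jb (ε / l) ≤ ε / t * jb (t / l) := by
    have := jb_scale (a := t / l) (b := ε / l) (by positivity) (by gcongr)
    rwa [h0] at this
  have h2 : t / ε * jb (ε / l) ≤ jb (t / l) := by
    have h3 : t / ε * (ε / t * jb (t / l)) = jb (t / l) := by field_simp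
    calc t / ε * jb (ε / l) ≤ t / ε * (ε / t * jb (t / l)) := by
          apply mul_le_mul_of_nonneg_left h1 (by positivity)
      _ = jb (t / l) := h3
  have h4 : jb (t / l) ^ (-α) ≤ (t / ε * jb (ε / l)) ^ (-α) :=
    Real.rpow_le_rpow_of_nonpos (mul_pos (by positivity) (jb_pos _)) h2 (neg_nonpos.2 hα)
  have h5 : (t / ε * jb (ε / l)) ^ (-α) = (t / ε) ^ (-α) * jb (ε / l) ^ (-α) :=
    Real.mul_rpow (by positivity) (jb_pos _).le
  have h6 : (t / ε) ^ (-α) = ε ^ α * t ^ (-α) := by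
    rw [Real.div_rpow ht.le hε.le, Real.rpow_neg ht.le, Real.rpow_neg hε.le]
    rw [div_inv_eq_mul]
    ring
  calc jb (t / l) ^ (-α) ≤ (t / ε * jb (ε / l)) ^ (-α) := h4
    _ = ε ^ α * t ^ (-α) * jb (ε / l) ^ (-α) := by rw [h5, h6]

lemma measurable_abs_rpow (γ : ℝ) : Measurable fun x : ℝ => |x| ^ γ := by
  have heq : (fun x : ℝ => |x| ^ γ)
      = fun x => if x = (0:ℝ) then (0:ℝ) ^ γ else Real.exp (Real.log |x| * γ) := by
    ext x
    by_cases hx : x = 0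
    · simp [hx]
    · rw [if_neg hx, Real.rpow_def_of_pos (abs_pos.2 hx)]
  rw [heq]
  exact Measurable.ite (measurableSet_eq) measurable_const
    (Real.measurable_exp.comp ((Real.measurable_log.comp measurable_abs).mul_const γ))

lemma abs_rpow_II {r ε : ℝ} (hr : -1 < r) (hε : 0 < ε) :
    IntervalIntegrable (fun x : ℝ => |x| ^ r) volume (-ε) 0 ∧
    IntervalIntegrable (fun x : ℝ => |x| ^ r) volume 0 ε := by
  have h1 : IntervalIntegrable (fun x : ℝ => |x| ^ r) volume 0 ε := by
    have h := intervalIntegrable_rpow' (a := 0) (b := ε) hr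
    rw [intervalIntegrable_iff_integrableOn_Icc_of_le hε.le] at h ⊢
    exact h.congr_fun (fun x hx => by rw [abs_of_nonneg hx.1]) measurableSet_Icc
  have h2 : IntervalIntegrable (fun x : ℝ => |x| ^ r) volume (-ε) 0 := by
    have h := (IntervalIntegrable.iff_comp_neg).1 h1
    simp only [abs_neg, neg_zero] at h
    exact h.symm
  exact ⟨h2, h1⟩

lemma abs_rpow_integrableOn {r ε : ℝ} (hr : -1 < r) (hε : 0 < ε) :
    IntegrableOn (fun x : ℝ => |x| ^ r) (Set.Icc (-ε) ε) := by
  obtain ⟨h2, h1⟩ := abs_rpow_II hr hε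
  have h3 := h2.trans h1
  rwa [intervalIntegrable_iff_integrableOn_Icc_of_le (by linarith)] at h3

lemma integral_abs_rpow {r ε : ℝ} (hr : -1 < r) (hε : 0 < ε) :
    ∫ x in Set.Icc (-ε) ε, |x| ^ r = 2 * (ε ^ (r + 1) / (r + 1)) := by
  obtain ⟨h2, h1⟩ := abs_rpow_II hr hε
  have hr1 : r + 1 ≠ 0 := by linarith
  have key : ∫ x in (0:ℝ)..ε, |x| ^ r = ε ^ (r + 1) / (r + 1) := by
    have e1 : ∫ x in (0:ℝ)..ε, |x| ^ r = ∫ x in (0:ℝ)..ε, x ^ r := by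
      apply intervalIntegral.integral_congr
      intro x hx
      rw [Set.uIcc_of_le hε.le] at hx
      simp only
      rw [abs_of_nonneg hx.1]
    rw [e1, integral_rpow (Or.inl hr), Real.zero_rpow hr1, sub_zero]
  have neg : ∫ x in (-ε:ℝ)..0, |x| ^ r = ε ^ (r + 1) / (r + 1) := by
    have h := intervalIntegral.integral_comp_neg (a := 0) (b := ε) (fun x : ℝ => |x| ^ r)
    simp only [abs_neg, neg_zero] at h
    rw [← h, key]
  have hadd := intervalIntegral.integral_add_adjacent_intervals h2 h1
  rw [MeasureTheory.integral_Icc_eq_integral_Ioc,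
    ← intervalIntegral.integral_of_le (by linarith : (-ε:ℝ) ≤ ε), ← hadd, key, neg]
  ring

theorem stmt_2 (α₁ α₂ γ : ℝ) (hα₁ : 0 ≤ α₁) (hα₂ : 0 ≤ α₂) (hγ : -1 < γ)
    (h : α₁ + α₂ - γ < 1) :
    ∃ c C : ℝ, 0 < c ∧ 0 < C ∧
      ∀ l₁ l₂ ε : ℝ, 0 < l₁ → 0 < l₂ → 0 < ε →
        (c * (ε ^ (γ + 1) * jb (ε / l₁) ^ (-α₁) * jb (ε / l₂) ^ (-α₂)) ≤
            ∫ x in {x : ℝ | |x| ≤ ε},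
              |x| ^ γ * jb (x / l₁) ^ (-α₁) * jb (x / l₂) ^ (-α₂)) ∧
          (∫ x in {x : ℝ | |x| ≤ ε},
              |x| ^ γ * jb (x / l₁) ^ (-α₁) * jb (x / l₂) ^ (-α₂)) ≤
            C * (ε ^ (γ + 1) * jb (ε / l₁) ^ (-α₁) * jb (ε / l₂) ^ (-α₂)) := by
  have hγ1 : 0 < γ + 1 := by linarith
  have hA : 0 < γ + 1 - (α₁ + α₂) := by linarith
  have hγA : -1 < γ - (α₁ + α₂) := by linarith
  refine ⟨(1 - (2:ℝ) ^ (-(γ + 1))) / (γ + 1), 2 / (γ + 1 - (α₁ + α₂)), ?_, ?_, ?_⟩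
  · apply div_pos _ hγ1
    have := Real.rpow_lt_one_of_one_lt_of_neg (x := 2) (z := -(γ + 1)) one_lt_two (by linarith)
    linarith
  · exact div_pos two_pos hA
  intro l₁ l₂ ε hl₁ hl₂ hε
  have hSet : {x : ℝ | |x| ≤ ε} = Set.Icc (-ε) ε := by
    ext x; simp [abs_le]
  rw [hSet]
  set g : ℝ → ℝ := fun x => |x| ^ γ * jb (x / l₁) ^ (-α₁) * jb (x / l₂) ^ (-α₂) with hg
  have hK₁ : 0 < jb (ε / l₁) ^ (-α₁) := Real.rpow_pos_of_pos (jb_pos _) _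
  have hK₂ : 0 < jb (ε / l₂) ^ (-α₂) := Real.rpow_pos_of_pos (jb_pos _) _
  -- measurability
  have c₁ : Continuous fun x : ℝ => jb (x / l₁) ^ (-α₁) :=
    (continuous_jb.comp (continuous_id.div_const l₁)).rpow_const fun x => Or.inl (jb_pos _).ne'
  have c₂ : Continuous fun x : ℝ => jb (x / l₂) ^ (-α₂) :=
    (continuous_jb.comp (continuous_id.div_const l₂)).rpow_const fun x => Or.inl (jb_pos _).ne'
  have hg_meas : Measurable g :=
    ((measurable_abs_rpow γ).mul c₁.measurable).mul c₂.measurable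
  have hg_nonneg : ∀ x, 0 ≤ g x := by
    intro x
    exact mul_nonneg (mul_nonneg (Real.rpow_nonneg (abs_nonneg x) γ)
      (Real.rpow_nonneg (jb_pos _).le _)) (Real.rpow_nonneg (jb_pos _).le _)
  have hg_le : ∀ x, g x ≤ |x| ^ γ := by
    intro x
    have h1 : jb (x / l₁) ^ (-α₁) ≤ 1 :=
      Real.rpow_le_one_of_one_le_of_nonpos (one_le_jb _) (by linarith)
    have h2 : jb (x / l₂) ^ (-α₂) ≤ 1 :=
      Real.rpow_le_one_of_one_le_of_nonpos (one_le_jb _) (by linarith)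
    have ha : 0 ≤ |x| ^ γ := Real.rpow_nonneg (abs_nonneg x) γ
    have hb : 0 < jb (x / l₁) ^ (-α₁) := Real.rpow_pos_of_pos (jb_pos _) _
    have hc : 0 < jb (x / l₂) ^ (-α₂) := Real.rpow_pos_of_pos (jb_pos _) _
    calc g x ≤ |x| ^ γ * jb (x / l₁) ^ (-α₁) * 1 :=
          mul_le_mul_of_nonneg_left h2 (by positivity)
      _ ≤ |x| ^ γ * 1 * 1 := by
          rw [mul_one, mul_one]
          exact mul_le_mul_of_nonneg_left h1 ha
      _ = |x| ^ γ := by ring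
  have hg_int : IntegrableOn g (Set.Icc (-ε) ε) := by
    apply Integrable.mono (abs_rpow_integrableOn hγ hε) hg_meas.aestronglyMeasurable
    refine Filter.Eventually.of_forall fun x => ?_
    rw [Real.norm_eq_abs, Real.norm_eq_abs, abs_of_nonneg (hg_nonneg x),
      abs_of_nonneg (Real.rpow_nonneg (abs_nonneg x) γ)]
    exact hg_le x
  constructor
  · -- lower bound
    have hsub : Set.Icc (ε/2) ε ⊆ Set.Icc (-ε) ε := Set.Icc_subset_Icc (by linarith) le_rfl
    have hint3 : IntegrableOn
        (fun x : ℝ => jb (ε / l₁) ^ (-α₁) * jb (ε / l₂) ^ (-α₂) * x ^ γ)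
        (Set.Icc (ε/2) ε) := by
      have hb : IntegrableOn (fun x : ℝ => x ^ γ) (Set.Icc (ε/2) ε) := by
        have := intervalIntegrable_rpow' (a := ε/2) (b := ε) hγ
        rwa [intervalIntegrable_iff_integrableOn_Icc_of_le (by linarith)] at this
      exact hb.const_mul _
    have l1 : ∫ x in Set.Icc (ε/2) ε,
        jb (ε / l₁) ^ (-α₁) * jb (ε / l₂) ^ (-α₂) * x ^ γ ≤ ∫ x in Set.Icc (ε/2) ε, g x := by
      apply setIntegral_mono_on hint3 (hg_int.mono_set hsub) measurableSet_Icc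
      intro x hx
      have hx0 : 0 < x := lt_of_lt_of_le (by linarith) hx.1
      have hj₁ : jb (x / l₁) ≤ jb (ε / l₁) := jb_mono (by positivity) (by gcongr; exact hx.2)
      have hj₂ : jb (x / l₂) ≤ jb (ε / l₂) := jb_mono (by positivity) (by gcongr; exact hx.2)
      have b₁ : jb (ε / l₁) ^ (-α₁) ≤ jb (x / l₁) ^ (-α₁) :=
        Real.rpow_le_rpow_of_nonpos (jb_pos _) hj₁ (by linarith)
      have b₂ : jb (ε / l₂) ^ (-α₂) ≤ jb (x / l₂) ^ (-α₂) :=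
        Real.rpow_le_rpow_of_nonpos (jb_pos _) hj₂ (by linarith)
      have hxγ : 0 ≤ x ^ γ := Real.rpow_nonneg hx0.le γ
      have : x ^ γ * jb (ε / l₁) ^ (-α₁) * jb (ε / l₂) ^ (-α₂) ≤
          x ^ γ * jb (x / l₁) ^ (-α₁) * jb (x / l₂) ^ (-α₂) := by
        apply mul_le_mul (mul_le_mul_of_nonneg_left b₁ hxγ) b₂ hK₂.le
        exact mul_nonneg hxγ (Real.rpow_nonneg (jb_pos _).le _)
      calc jb (ε / l₁) ^ (-α₁) * jb (ε / l₂) ^ (-α₂) * x ^ γ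
          = x ^ γ * jb (ε / l₁) ^ (-α₁) * jb (ε / l₂) ^ (-α₂) := by ring
        _ ≤ x ^ γ * jb (x / l₁) ^ (-α₁) * jb (x / l₂) ^ (-α₂) := this
        _ = g x := by rw [hg]; simp only; rw [abs_of_pos hx0]
    have l2 : ∫ x in Set.Icc (ε/2) ε, g x ≤ ∫ x in Set.Icc (-ε) ε, g x :=
      setIntegral_mono_set hg_int (Filter.Eventually.of_forall hg_nonneg)
        (HasSubset.Subset.eventuallyLE hsub)
    have lcalc : ∫ x in Set.Icc (ε/2) ε,
        jb (ε / l₁) ^ (-α₁) * jb (ε / l₂) ^ (-α₂) * x ^ γ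
        = jb (ε / l₁) ^ (-α₁) * jb (ε / l₂) ^ (-α₂)
          * ((ε ^ (γ + 1) - (ε/2) ^ (γ + 1)) / (γ + 1)) := by
      rw [MeasureTheory.integral_const_mul, MeasureTheory.integral_Icc_eq_integral_Ioc,
        ← intervalIntegral.integral_of_le (by linarith : ε/2 ≤ ε),
        integral_rpow (Or.inl hγ)]
    have hhalf : (ε/2) ^ (γ + 1) = ε ^ (γ + 1) * (2:ℝ) ^ (-(γ + 1)) := by
      rw [Real.div_rpow hε.le (by norm_num : (0:ℝ) ≤ 2),
        Real.rpow_neg (by norm_num : (0:ℝ) ≤ 2)]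
      ring
    have : (1 - (2:ℝ) ^ (-(γ + 1))) / (γ + 1)
        * (ε ^ (γ + 1) * jb (ε / l₁) ^ (-α₁) * jb (ε / l₂) ^ (-α₂))
        = jb (ε / l₁) ^ (-α₁) * jb (ε / l₂) ^ (-α₂)
          * ((ε ^ (γ + 1) - (ε/2) ^ (γ + 1)) / (γ + 1)) := by
      rw [hhalf]; ring
    rw [this, ← lcalc]
    exact le_trans l1 l2
  · -- upper bound
    have h0 : ∀ᵐ x : ℝ ∂volume, x ≠ 0 := by
      rw [MeasureTheory.ae_iff]
      simp only [ne_eq, not_not, Set.setOf_eq_eq_singleton]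
      exact measure_singleton 0
    have hint2 : IntegrableOn
        (fun x : ℝ => ε ^ (α₁ + α₂) * (jb (ε / l₁) ^ (-α₁) * jb (ε / l₂) ^ (-α₂))
          * |x| ^ (γ - (α₁ + α₂))) (Set.Icc (-ε) ε) :=
      (abs_rpow_integrableOn hγA hε).const_mul _
    have hub : ∀ x ∈ Set.Icc (-ε) ε, x ≠ 0 → g x ≤
        ε ^ (α₁ + α₂) * (jb (ε / l₁) ^ (-α₁) * jb (ε / l₂) ^ (-α₂))
          * |x| ^ (γ - (α₁ + α₂)) := by
      intro x hx hx0
      have ht : 0 < |x| := abs_pos.2 hx0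
      have htε : |x| ≤ ε := abs_le.2 ⟨hx.1, hx.2⟩
      have e₁ : jb (x / l₁) = jb (|x| / l₁) := by
        rw [show |x| / l₁ = |x / l₁| by rw [abs_div, abs_of_pos hl₁], jb_abs]
      have e₂ : jb (x / l₂) = jb (|x| / l₂) := by
        rw [show |x| / l₂ = |x / l₂| by rw [abs_div, abs_of_pos hl₂], jb_abs]
      have b₁ := key_upper hl₁ hα₁ ht htε
      have b₂ := key_upper hl₂ hα₂ ht htε
      have ha : 0 ≤ |x| ^ γ := Real.rpow_nonneg (abs_nonneg x) γ
      have step : |x| ^ γ * jb (|x| / l₁) ^ (-α₁) * jb (|x| / l₂) ^ (-α₂) ≤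
          |x| ^ γ * (ε ^ α₁ * |x| ^ (-α₁) * jb (ε / l₁) ^ (-α₁))
            * (ε ^ α₂ * |x| ^ (-α₂) * jb (ε / l₂) ^ (-α₂)) := by
        apply mul_le_mul (mul_le_mul_of_nonneg_left b₁ ha) b₂
          (Real.rpow_nonneg (jb_pos _).le _)
        have : 0 ≤ ε ^ α₁ * |x| ^ (-α₁) * jb (ε / l₁) ^ (-α₁) := by
          have := hK₁; positivity
        exact mul_nonneg ha this
      have hexp : ε ^ α₁ * ε ^ α₂ = ε ^ (α₁ + α₂) := (Real.rpow_add hε _ _).symm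
      have hexp2 : |x| ^ γ * (|x| ^ (-α₁) * |x| ^ (-α₂)) = |x| ^ (γ - (α₁ + α₂)) := by
        rw [← Real.rpow_add ht, ← Real.rpow_add ht]
        congr 1; ring
      calc g x = |x| ^ γ * jb (|x| / l₁) ^ (-α₁) * jb (|x| / l₂) ^ (-α₂) := by
            rw [hg]; simp only; rw [e₁, e₂]
        _ ≤ |x| ^ γ * (ε ^ α₁ * |x| ^ (-α₁) * jb (ε / l₁) ^ (-α₁))
            * (ε ^ α₂ * |x| ^ (-α₂) * jb (ε / l₂) ^ (-α₂)) := step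
        _ = (ε ^ α₁ * ε ^ α₂) * (jb (ε / l₁) ^ (-α₁) * jb (ε / l₂) ^ (-α₂))
            * (|x| ^ γ * (|x| ^ (-α₁) * |x| ^ (-α₂))) := by ring
        _ = ε ^ (α₁ + α₂) * (jb (ε / l₁) ^ (-α₁) * jb (ε / l₂) ^ (-α₂))
            * |x| ^ (γ - (α₁ + α₂)) := by rw [hexp, hexp2]
    have step1 : ∫ x in Set.Icc (-ε) ε, g x ≤ ∫ x in Set.Icc (-ε) ε,
        ε ^ (α₁ + α₂) * (jb (ε / l₁) ^ (-α₁) * jb (ε / l₂) ^ (-α₂))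
          * |x| ^ (γ - (α₁ + α₂)) := by
      apply setIntegral_mono_on_ae hg_int hint2 measurableSet_Icc
      filter_upwards [h0] with x hx0 hxmem
      exact hub x hxmem hx0
    have step2 : ∫ x in Set.Icc (-ε) ε,
        ε ^ (α₁ + α₂) * (jb (ε / l₁) ^ (-α₁) * jb (ε / l₂) ^ (-α₂))
          * |x| ^ (γ - (α₁ + α₂))
        = ε ^ (α₁ + α₂) * (jb (ε / l₁) ^ (-α₁) * jb (ε / l₂) ^ (-α₂))
          * (2 * (ε ^ (γ - (α₁ + α₂) + 1) / (γ - (α₁ + α₂) + 1))) := by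
      rw [MeasureTheory.integral_const_mul, integral_abs_rpow hγA hε]
    have hmul : ε ^ (α₁ + α₂) * ε ^ (γ - (α₁ + α₂) + 1) = ε ^ (γ + 1) := by
      rw [← Real.rpow_add hε]; congr 1; ring
    have step3 : ε ^ (α₁ + α₂) * (jb (ε / l₁) ^ (-α₁) * jb (ε / l₂) ^ (-α₂))
          * (2 * (ε ^ (γ - (α₁ + α₂) + 1) / (γ - (α₁ + α₂) + 1)))
        = 2 / (γ + 1 - (α₁ + α₂))
          * (ε ^ (γ + 1) * jb (ε / l₁) ^ (-α₁) * jb (ε / l₂) ^ (-α₂)) := by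
      rw [← hmul]; ring
    calc ∫ x in Set.Icc (-ε) ε, g x ≤ _ := step1
      _ = _ := step2
      _ = _ := step3
end

section
/- Let x ∈ ℝⁿ \ {0}, φ_x(ξ) := |ξ|⁴ + ξ·x, and ξ_st := -x/(4^{1/3}|x|^{2/3}). If ξ ∈ ℝⁿ satisfies ||ξ| - |ξ_st|| ≥ 1, then |∇φ_x(ξ)| ≥ c |ξ_st|² for a universal constant c > 0; moreover if |ξ| ≥ 2|ξ_st| and |ξ| ≥ 1 then |∇φ_x(ξ)| ≥ c|ξ|³. -/
open InnerProductSpace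

lemma grad_aux {E : Type*} [NormedAddCommGroup E] [InnerProductSpace ℝ E] [CompleteSpace E]
    (x ξ : E) :
    HasGradientAt (fun ζ : E => ‖ζ‖ ^ 4 + (inner ℝ ζ x : ℝ)) ((4 * ‖ξ‖ ^ 2) • ξ + x) ξ := by
  rw [hasGradientAt_iff_hasFDerivAt]
  have h1 : HasFDerivAt (fun ζ : E => ‖ζ‖ ^ 2) (2 • (innerSL ℝ ξ)) ξ :=
    (hasStrictFDerivAt_norm_sq ξ).hasFDerivAt
  have h2 := h1.mul h1
  have h3 : HasFDerivAt (fun ζ : E => (inner ℝ ζ x : ℝ)) (innerSL ℝ x) ξ := by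
    have := (innerSL ℝ x).hasFDerivAt (x := ξ)
    convert this using 2 with ζ
    simp [real_inner_comm]
  have h4 := h2.add h3
  convert h4 using 1
  case e'_11 =>
    ext ζ
    simp only [Pi.add_apply, Pi.mul_apply]
    ring
  case e'_12 =>
    ext v
    simp [LinearIsometryEquiv.norm_map, toDual_apply_apply, inner_add_left, inner_smul_left,
      real_inner_comm]
    ring
  all_goals rfl

lemma arith1 (r s G : ℝ) (hr : 0 ≤ r) (hs : 0 ≤ s) (key : |4 * r ^ 3 - 4 * s ^ 3| ≤ G)
    (h1 : 1 ≤ |r - s|) : 1 * s ^ 2 ≤ G := by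
  rcases abs_cases (r - s) with ⟨he, _⟩ | ⟨he, _⟩ <;> rw [he] at h1 <;>
    rcases abs_cases (4 * r ^ 3 - 4 * s ^ 3) with ⟨hf, hf2⟩ | ⟨hf, hf2⟩ <;> rw [hf] at key <;>
    nlinarith [sq_nonneg (r - s), sq_nonneg (r + s), sq_nonneg s, sq_nonneg r]

lemma arith2 (r s G : ℝ) (hr : 0 ≤ r) (hs : 0 ≤ s) (key : |4 * r ^ 3 - 4 * s ^ 3| ≤ G)
    (h1 : 2 * s ≤ r) (h2 : 1 ≤ r) : 1 * r ^ 3 ≤ G := by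
  rcases abs_cases (4 * r ^ 3 - 4 * s ^ 3) with ⟨hf, hf2⟩ | ⟨hf, hf2⟩ <;> rw [hf] at key <;>
    nlinarith [sq_nonneg s, sq_nonneg r, mul_nonneg hs hr]

theorem stmt_5 : ∃ c : ℝ, 0 < c ∧
    ∀ (n : ℕ) (x : EuclideanSpace ℝ (Fin n)), x ≠ 0 →
      ∀ ξ : EuclideanSpace ℝ (Fin n),
        (1 ≤ |‖ξ‖ - ‖(-((4 : ℝ) ^ ((1 : ℝ) / 3) * ‖x‖ ^ ((2 : ℝ) / 3))⁻¹) • x‖| →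
          c * ‖(-((4 : ℝ) ^ ((1 : ℝ) / 3) * ‖x‖ ^ ((2 : ℝ) / 3))⁻¹) • x‖ ^ 2 ≤
            ‖gradient (fun ζ : EuclideanSpace ℝ (Fin n) => ‖ζ‖ ^ 4 + (inner ℝ ζ x : ℝ)) ξ‖) ∧
        (2 * ‖(-((4 : ℝ) ^ ((1 : ℝ) / 3) * ‖x‖ ^ ((2 : ℝ) / 3))⁻¹) • x‖ ≤ ‖ξ‖ → 1 ≤ ‖ξ‖ →
          c * ‖ξ‖ ^ 3 ≤
            ‖gradient (fun ζ : EuclideanSpace ℝ (Fin n) => ‖ζ‖ ^ 4 + (inner ℝ ζ x : ℝ)) ξ‖) := by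
  refine ⟨1, one_pos, fun n x hx ξ => ?_⟩
  set a := ‖x‖ with ha_def
  have ha : 0 < a := norm_pos_iff.mpr hx
  set s := ‖(-((4 : ℝ) ^ ((1 : ℝ) / 3) * ‖x‖ ^ ((2 : ℝ) / 3))⁻¹) • x‖ with hs_def
  set r := ‖ξ‖ with hr_def
  have hrnn : 0 ≤ r := norm_nonneg _
  have hsnn : 0 ≤ s := norm_nonneg _
  have ht : (0:ℝ) < (4 : ℝ) ^ ((1 : ℝ) / 3) := Real.rpow_pos_of_pos (by norm_num) _
  have hu : (0:ℝ) < a ^ ((2 : ℝ) / 3) := Real.rpow_pos_of_pos ha _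
  have hs_eq : s = a / ((4 : ℝ) ^ ((1 : ℝ) / 3) * a ^ ((2 : ℝ) / 3)) := by
    rw [hs_def, norm_smul]
    rw [norm_neg, norm_inv, Real.norm_eq_abs, abs_of_pos (by positivity)]
    rw [← ha_def]
    ring
  have ht3 : ((4 : ℝ) ^ ((1 : ℝ) / 3)) ^ 3 = 4 := by
    rw [← Real.rpow_natCast ((4 : ℝ) ^ ((1 : ℝ) / 3)) 3, ← Real.rpow_mul (by norm_num)]
    norm_num
  have hu3 : (a ^ ((2 : ℝ) / 3)) ^ 3 = a ^ 2 := by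
    rw [← Real.rpow_natCast (a ^ ((2 : ℝ) / 3)) 3, ← Real.rpow_mul ha.le,
      ← Real.rpow_natCast a 2]
    norm_num
  have hs4 : 4 * s ^ 3 = a := by
    rw [hs_eq, div_pow, mul_pow, ht3, hu3]
    field_simp
  have hgrad : gradient (fun ζ : EuclideanSpace ℝ (Fin n) => ‖ζ‖ ^ 4 + (inner ℝ ζ x : ℝ)) ξ
      = (4 * r ^ 2) • ξ + x := (grad_aux x ξ).gradient
  have key : |4 * r ^ 3 - a| ≤
      ‖gradient (fun ζ : EuclideanSpace ℝ (Fin n) => ‖ζ‖ ^ 4 + (inner ℝ ζ x : ℝ)) ξ‖ := by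
    rw [hgrad]
    have h1 : ‖(4 * r ^ 2) • ξ‖ = 4 * r ^ 3 := by
      rw [norm_smul, Real.norm_eq_abs, abs_of_nonneg (by positivity), ← hr_def]
      ring
    calc |4 * r ^ 3 - a| = |‖(4 * r ^ 2) • ξ‖ - ‖-x‖| := by rw [h1, norm_neg]
      _ ≤ ‖(4 * r ^ 2) • ξ - (-x)‖ := abs_norm_sub_norm_le _ _
      _ = ‖(4 * r ^ 2) • ξ + x‖ := by rw [sub_neg_eq_add]
  rw [← hs4] at key
  set G := ‖gradient (fun ζ : EuclideanSpace ℝ (Fin n) => ‖ζ‖ ^ 4 + (inner ℝ ζ x : ℝ)) ξ‖ with hG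
  clear_value G
  exact ⟨fun h1 => arith1 r s G hrnn hsnn key h1,
    fun h1 h2 => arith2 r s G hrnn hsnn key h1 h2⟩
end
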